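/- Let Q be a medial quandle and q ∈ Q. Then Fix(q) = {d ∈ Dis(Q) : d(q) = q} is a subgroup of Dis(Q) that is closed under the Λ-scalar multiplication of Dis(Q) and is annihilated by 1−t; that is, Fix(q) is a Λ-submodule of Dis(Q) with t·d = d for every d ∈ Fix(q). -/

import Mathlib

open LaurentPolynomial

set_option synthInstance.maxHeartbeats 1000000
set_option maxHeartbeats 1000000

noncomputable section

/-- The ring `Λ = ℤ[t,t⁻¹]` of Laurent polynomials with integer coefficients. -/
abbrev Λ : Type := LaurentPolynomial ℤ

/-- The variable `t ∈ Λ`. -/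
abbrev tL : Λ := T 1

/-- A medial quandle structure on a type `Q`: an idempotent binary operation whose right
translations are bijections, satisfying the medial law. -/
structure MedialQuandleStr (Q : Type*) where
  op : Q → Q → Q
  idem : ∀ x, op x x = x
  bij : ∀ y, Function.Bijective fun x => op x y
  medial : ∀ w x y z, op (op w x) (op y z) = op (op w y) (op x z)

/-- A quandle structure on a type `T`. -/
structure QuandleStr (T : Type*) where
  op : T → T → T
  idem : ∀ x, op x x = x
  bij : ∀ y, Function.Bijective fun x => op x y
  distrib : ∀ x y z, op (op x y) z = op (op x z) (op y z)

namespace MedialQuandleStr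

variable {Q : Type*} (s : MedialQuandleStr Q)

/-- The translation `β_y : x ↦ x ▷ y`, as a permutation of `Q`. -/
def β (y : Q) : Equiv.Perm Q := Equiv.ofBijective _ (s.bij y)

/-- `β(Q)`: the subgroup of permutations generated by the translations. -/
def transGroup : Subgroup (Equiv.Perm Q) := Subgroup.closure (Set.range s.β)

/-- The displacement group `Dis(Q)`, generated by the elementary displacements
`β_y β_z⁻¹`. -/
def Dis : Subgroup (Equiv.Perm Q) :=
  Subgroup.closure {d : Equiv.Perm Q | ∃ y z, d = s.β y * (s.β z)⁻¹}

/-- The orbit of `q`: the smallest subset of `Q` containing `q` and closed under the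
action of `β(Q)`. -/
def orbit (q : Q) : Set Q := {x | ∃ g ∈ s.transGroup, g q = x}

end MedialQuandleStr

section Construction

variable {M : Type*} [AddCommGroup M] [Module Λ M] {I : Type*}

/-- The carrier of the quandle `Q(N,(m_i),(X_i))`: the disjoint union of the quotients
`Q_i = N/X_i`. -/
def QCar (N : Submodule Λ M) (X : I → Submodule Λ ↥N) : Type _ :=
  Σ i : I, ↥N ⧸ X i

/-- The condition `(1-t)·X_i = 0` for all `i`. -/
def annCond (N : Submodule Λ M) (X : I → Submodule Λ ↥N) : Prop :=
  ∀ i, ∀ x ∈ X i, (1 - tL) • (x : ↥N) = 0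

/-- Multiplication by `1-t`, descended from `N/X_j` to `N` (well defined since
`(1-t)·X_j = 0`). -/
def oneSubT (N : Submodule Λ M) {X : I → Submodule Λ ↥N} (h : annCond N X) (j : I) :
    (↥N ⧸ X j) →ₗ[Λ] ↥N :=
  Submodule.liftQ (X j) ((1 - tL) • (LinearMap.id : ↥N →ₗ[Λ] ↥N))
    (fun x hx => by simpa using h j x hx)

/-- The operation of `Q(N,(m_i),(X_i))`: for `x ∈ Q_i` and `y ∈ Q_j`,
`x ▷ y = m_j - m_i + t·x + (1-t)·y + X_i ∈ Q_i`. -/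
def qop (N : Submodule Λ M) (m : I → M) {X : I → Submodule Λ ↥N}
    (hm : ∀ i j, m i - m j ∈ N) (h : annCond N X) :
    QCar N X → QCar N X → QCar N X :=
  fun x y =>
    ⟨x.1, Submodule.Quotient.mk (⟨m y.1 - m x.1, hm y.1 x.1⟩ : ↥N)
        + tL • x.2 + Submodule.Quotient.mk (oneSubT N h y.1 y.2)⟩

end Construction

theorem Equiv.Perm.apply_inv_self {α : Type*} (f : Equiv.Perm α) (x : α) : f (f⁻¹ x) = x :=
  f.apply_symm_apply x

theorem Equiv.Perm.inv_apply_self {α : Type*} (f : Equiv.Perm α) (x : α) : f⁻¹ (f x) = x :=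
  f.symm_apply_apply x

section Aux

variable {Q : Type*} (s : MedialQuandleStr Q)

lemma β_apply (y x : Q) : s.β y x = s.op x y := rfl

lemma medial_perm (x y z : Q) :
    s.β (s.op y z) * s.β x = s.β (s.op x z) * s.β y := by
  ext w
  simp only [Equiv.Perm.mul_apply, β_apply]
  exact s.medial w x y z

lemma β_hom (z x y : Q) : s.β z (s.op x y) = s.op (s.β z x) (s.β z y) := by
  simp only [β_apply]
  rw [show s.op (s.op x y) z = s.op (s.op x y) (s.op z z) by rw [s.idem]]
  exact s.medial x y z z

lemma conj_β (z x : Q) : s.β z * s.β x * (s.β z)⁻¹ = s.β (s.op x z) := by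
  ext w
  simp only [Equiv.Perm.mul_apply, β_apply]
  have : s.β z (s.op ((s.β z)⁻¹ w) x) = s.op (s.β z ((s.β z)⁻¹ w)) (s.β z x) :=
    β_hom s z _ x
  rw [Equiv.Perm.apply_inv_self] at this
  simpa [β_apply] using this

lemma key_rel (x y z : Q) :
    s.β y * (s.β z)⁻¹ * s.β x = s.β x * (s.β z)⁻¹ * s.β y := by
  have h := medial_perm s x y z
  rw [← conj_β s z y, ← conj_β s z x] at h
  have h2 : s.β z * (s.β y * (s.β z)⁻¹ * s.β x) =
      s.β z * (s.β x * (s.β z)⁻¹ * s.β y) := by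
    simpa [mul_assoc] using h
  exact mul_left_cancel h2

lemma commute_g (qq x y : Q) :
    Commute (s.β x * (s.β qq)⁻¹) (s.β y * (s.β qq)⁻¹) := by
  show _ = _
  have h := key_rel s y x qq
  calc s.β x * (s.β qq)⁻¹ * (s.β y * (s.β qq)⁻¹)
      = (s.β x * (s.β qq)⁻¹ * s.β y) * (s.β qq)⁻¹ := by group
    _ = (s.β y * (s.β qq)⁻¹ * s.β x) * (s.β qq)⁻¹ := by rw [h]
    _ = s.β y * (s.β qq)⁻¹ * (s.β x * (s.β qq)⁻¹) := by group

lemma gen_decomp (qq y z : Q) :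
    s.β y * (s.β z)⁻¹ = (s.β y * (s.β qq)⁻¹) * (s.β z * (s.β qq)⁻¹)⁻¹ := by
  group

lemma gen_commute (qq : Q) (a b : Equiv.Perm Q)
    (ha : a ∈ {d : Equiv.Perm Q | ∃ y z, d = s.β y * (s.β z)⁻¹})
    (hb : b ∈ {d : Equiv.Perm Q | ∃ y z, d = s.β y * (s.β z)⁻¹}) :
    Commute a b := by
  obtain ⟨y, z, rfl⟩ := ha
  obtain ⟨u, v, rfl⟩ := hb
  rw [gen_decomp s qq y z, gen_decomp s qq u v]
  exact ((commute_g s qq y u).mul_right (commute_g s qq y v).inv_right).mul_left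
    (((commute_g s qq z u).mul_right (commute_g s qq z v).inv_right).inv_left)

lemma dis_comm (qq : Q) (a : Equiv.Perm Q) (ha : a ∈ s.Dis)
    (b : Equiv.Perm Q) (hb : b ∈ s.Dis) : Commute a b := by
  refine Subgroup.closure_induction
    (fun x hx => ?_) (Commute.one_left b) (fun x y _ _ hx hy => hx.mul_left hy)
    (fun x _ hx => hx.inv_left) ha
  refine Subgroup.closure_induction
    (fun z hz => gen_commute s qq x z hx hz) (Commute.one_right x)
    (fun u v _ _ hu hv => hu.mul_right hv) (fun u _ hu => hu.inv_right) hb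

lemma β_inv_hom (z x y : Q) :
    (s.β z)⁻¹ (s.op x y) = s.op ((s.β z)⁻¹ x) ((s.β z)⁻¹ y) := by
  apply (s.β z).injective
  rw [Equiv.Perm.apply_inv_self, β_hom, Equiv.Perm.apply_inv_self,
    Equiv.Perm.apply_inv_self]

lemma dis_hom (d : Equiv.Perm Q) (hd : d ∈ s.Dis) (x y : Q) :
    d (s.op x y) = s.op (d x) (d y) := by
  revert x y
  refine Subgroup.closure_induction (fun g hg x y => ?_)
    (fun x y => rfl) (fun g h _ _ hg hh x y => ?_) (fun g _ hg x y => ?_) hd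
  · obtain ⟨u, v, rfl⟩ := hg
    simp only [Equiv.Perm.mul_apply, β_inv_hom, β_hom]
  · simp only [Equiv.Perm.mul_apply, hh, hg]
  · apply g.injective
    rw [Equiv.Perm.apply_inv_self, hg, Equiv.Perm.apply_inv_self,
      Equiv.Perm.apply_inv_self]

lemma aut_conj (d : Equiv.Perm Q) (hd : d ∈ s.Dis) (x : Q) :
    d * s.β x * d⁻¹ = s.β (d x) := by
  ext w
  simp only [Equiv.Perm.mul_apply, β_apply]
  rw [dis_hom s d hd, Equiv.Perm.apply_inv_self]

end Aux

/-- For a medial quandle `Q` and `q ∈ Q`, the set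
`Fix(q) = {d ∈ Dis(Q) : d(q) = q}` is a subgroup of `Dis(Q)` which is closed under the
`Λ`-scalar multiplication of `Dis(Q)` (given by `t·d = β_{q*} d β_{q*}⁻¹`) and is
annihilated by `1 - t`: indeed `t·d = d` for every `d ∈ Fix(q)`. -/
theorem stmt5 {Q : Type*} (s : MedialQuandleStr Q) (q : Q)
    (F : Set (Equiv.Perm Q)) (hF : F = {d : Equiv.Perm Q | d ∈ s.Dis ∧ d q = q}) :
    (1 : Equiv.Perm Q) ∈ F ∧
    (∀ d ∈ F, d⁻¹ ∈ F) ∧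
    (∀ d ∈ F, ∀ d' ∈ F, d * d' ∈ F) ∧
    (∀ d ∈ F, ∀ q' : Q, s.β q' * d * (s.β q')⁻¹ = d) := by
  subst hF
  refine ⟨⟨one_mem _, rfl⟩, fun d hd => ⟨inv_mem hd.1, ?_⟩, fun d hd d' hd' =>
    ⟨mul_mem hd.1 hd'.1, by simp [Equiv.Perm.mul_apply, hd'.2, hd.2]⟩, ?_⟩
  · conv_lhs => rw [← hd.2]
    exact Equiv.Perm.inv_apply_self _ _
  · rintro d ⟨hd, hq⟩ q'
    have hβq : d * s.β q = s.β q * d := by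
      have h := aut_conj s d hd q
      rw [hq] at h
      exact mul_inv_eq_iff_eq_mul.mp h
    have hc : s.β q' * (s.β q)⁻¹ * d = d * (s.β q' * (s.β q)⁻¹) :=
      dis_comm s q _ (Subgroup.subset_closure ⟨q', q, rfl⟩) d hd
    have hmain : s.β q' * d = d * s.β q' := by
      calc s.β q' * d = (s.β q' * (s.β q)⁻¹) * (s.β q * d) := by group
        _ = (s.β q' * (s.β q)⁻¹) * (d * s.β q) := by rw [hβq]
        _ = ((s.β q' * (s.β q)⁻¹) * d) * s.β q := by group
        _ = (d * (s.β q' * (s.β q)⁻¹)) * s.β q := by rw [hc]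
        _ = d * s.β q' := by group
    rw [hmain]
    group
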